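/- arXiv:2006.09356 — 2 statements merged into one kernel-verified Lean document; each statement's English description precedes it below -/
import Mathlib

section
/- Let μ be a Borel probability measure on ℝ with finite second moment and variance σ². Then for all z, z′ in the upper half-plane ℂ⁺, |(F_μ(z) − F_μ(z′))/(z − z′) − 1| ≤ σ²/(Im z · Im z′) whenever z ≠ z′; equivalently, F_μ(z) − F_μ(z′) = (z − z′)·(1 + τ) for some τ ∈ ℂ with |τ| ≤ σ²/(Im z · Im z′). -/
open MeasureTheory

noncomputable section

/-- The Stieltjes transform of a measure on `ℝ`. -/
def stT (μ : Measure ℝ) (z : ℂ) : ℂ := ∫ t, ((t : ℂ) - z)⁻¹ ∂μ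

/-- The reciprocal Cauchy transform `F_μ = −1/m_μ`. -/
def Ffun (μ : Measure ℝ) (z : ℂ) : ℂ := -(stT μ z)⁻¹

namespace SP

open Complex Filter

variable {μ : Measure ℝ} [IsProbabilityMeasure μ]


lemma sub_z_ne (z : ℂ) (hz : 0 < z.im) (t : ℝ) : (t : ℂ) - z ≠ 0 := by
  intro h
  have h2 : ((t:ℂ) - z).im = 0 := by rw [h]; simp
  rw [Complex.sub_im, Complex.ofReal_im] at h2
  linarith

lemma im_le_norm (z : ℂ) (hz : 0 < z.im) (t : ℝ) : z.im ≤ ‖(t:ℂ) - z‖ := by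
  have h := Complex.abs_im_le_norm ((t:ℂ) - z)
  rw [Complex.sub_im, Complex.ofReal_im] at h
  calc z.im = |0 - z.im| := by rw [zero_sub, abs_neg, abs_of_pos hz]
  _ ≤ _ := h

lemma norm_res_le (z : ℂ) (hz : 0 < z.im) (t : ℝ) :
    ‖((t:ℂ) - z)⁻¹‖ ≤ (z.im)⁻¹ := by
  rw [norm_inv]
  exact inv_anti₀ hz (im_le_norm z hz t)

lemma cont_res (z : ℂ) (hz : 0 < z.im) : Continuous (fun t : ℝ => ((t:ℂ) - z)⁻¹) :=
  (Complex.continuous_ofReal.sub continuous_const).inv₀ (sub_z_ne z hz)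


lemma integrable_quad (hint : Integrable (fun t : ℝ => t ^ 2) μ)
    {E : Type*} [NormedAddCommGroup E] {h : ℝ → E}
    (hm : AEStronglyMeasurable h μ) {C : ℝ}
    (hb : ∀ t, ‖h t‖ ≤ C * (1 + t ^ 2)) : Integrable h μ :=
  Integrable.mono' (((integrable_const (1:ℝ)).add hint).const_mul C) hm
    (Eventually.of_forall hb)

lemma integrable_id (hint : Integrable (fun t : ℝ => t ^ 2) μ) :
    Integrable (fun t : ℝ => t) μ := by
  refine integrable_quad hint (aestronglyMeasurable_id) (C := 1) (fun t => ?_)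
  rw [Real.norm_eq_abs]
  nlinarith [_root_.sq_abs t, sq_nonneg (|t| - 1), abs_nonneg t]



lemma integrable_res (z : ℂ) (hz : 0 < z.im) :
    Integrable (fun t : ℝ => ((t:ℂ) - z)⁻¹) μ :=
  Integrable.mono' (integrable_const ((z.im)⁻¹)) (cont_res z hz).aestronglyMeasurable
    (Eventually.of_forall (norm_res_le z hz))

lemma im_stT_pos (z : ℂ) (hz : 0 < z.im) : 0 < (stT μ z).im := by
  have him : ∀ t : ℝ, (((t:ℂ) - z)⁻¹).im = z.im / Complex.normSq ((t:ℂ) - z) := by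
    intro t
    rw [Complex.inv_im, Complex.sub_im, Complex.ofReal_im]
    ring_nf
  have hi := integral_im (μ := μ) (𝕜 := ℂ) (integrable_res z hz)
  simp only [RCLike.im_to_complex] at hi
  rw [stT, ← hi]
  have hpos : ∀ t : ℝ, 0 < (((t:ℂ) - z)⁻¹).im := by
    intro t
    rw [him t]
    exact div_pos hz (Complex.normSq_pos.2 (sub_z_ne z hz t))
  have hii : Integrable (fun t : ℝ => (((t:ℂ) - z)⁻¹).im) μ :=
    Integrable.mono' (integrable_const ((z.im)⁻¹))
      ((Complex.continuous_im.comp (cont_res z hz)).aestronglyMeasurable)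
      (Eventually.of_forall (fun t => by
        rw [Real.norm_eq_abs]
        calc |(((t:ℂ) - z)⁻¹).im| ≤ ‖((t:ℂ) - z)⁻¹‖ := Complex.abs_im_le_norm _
        _ ≤ (z.im)⁻¹ := norm_res_le z hz t))
  rw [integral_pos_iff_support_of_nonneg (fun t => (hpos t).le) hii]
  have : Function.support (fun t : ℝ => (((t:ℂ) - z)⁻¹).im) = Set.univ :=
    Set.eq_univ_of_forall (fun t => (hpos t).ne')
  rw [this, measure_univ]
  norm_num

lemma stT_ne (z : ℂ) (hz : 0 < z.im) : stT μ z ≠ 0 := by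
  intro h
  have := im_stT_pos (μ := μ) z hz
  rw [h] at this
  simp at this

/-- the auxiliary function `y_w`. -/
def yfun (μ : Measure ℝ) (w : ℂ) (t : ℝ) : ℂ :=
  ((t:ℂ) + (-(1 + w * stT μ w) / stT μ w)) * ((t:ℂ) - w)⁻¹

lemma cont_y (w : ℂ) (hw : 0 < w.im) : Continuous (yfun μ w) :=
  ((Complex.continuous_ofReal.add continuous_const).mul (cont_res w hw))

lemma abs_le_one_add_sq (t : ℝ) : |t| ≤ 1 + t ^ 2 := by
  nlinarith [_root_.sq_abs t, sq_nonneg (|t| - 1), abs_nonneg t]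

lemma norm_ofReal_add (t : ℝ) (c : ℂ) : ‖(t:ℂ) + c‖ ≤ |t| + ‖c‖ := by
  calc ‖(t:ℂ) + c‖ ≤ ‖(t:ℂ)‖ + ‖c‖ := norm_add_le _ _
  _ = |t| + ‖c‖ := by rw [Complex.norm_real, Real.norm_eq_abs]

lemma norm_y_le (w : ℂ) (hw : 0 < w.im) (t : ℝ) :
    ‖yfun μ w t‖ ≤ (|t| + ‖(-(1 + w * stT μ w) / stT μ w : ℂ)‖) * (w.im)⁻¹ := by
  rw [yfun, norm_mul]
  exact mul_le_mul (norm_ofReal_add _ _) (norm_res_le w hw t)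
    (norm_nonneg _) (by positivity)

lemma norm_y_quad (w : ℂ) (hw : 0 < w.im) (t : ℝ) :
    ‖yfun μ w t‖ ≤ ((1 + ‖(-(1 + w * stT μ w) / stT μ w : ℂ)‖) * (w.im)⁻¹) * (1 + t ^ 2) := by
  refine le_trans (norm_y_le w hw t) ?_
  have h1 : |t| ≤ 1 + t ^ 2 := abs_le_one_add_sq t
  have h2 : (0:ℝ) ≤ ‖(-(1 + w * stT μ w) / stT μ w : ℂ)‖ := norm_nonneg _
  have h3 : (0:ℝ) ≤ (w.im)⁻¹ := by positivity
  calc (|t| + ‖(-(1 + w * stT μ w) / stT μ w : ℂ)‖) * (w.im)⁻¹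
      ≤ ((1 + ‖(-(1 + w * stT μ w) / stT μ w : ℂ)‖) * (1 + t ^ 2)) * (w.im)⁻¹ := by
        refine mul_le_mul_of_nonneg_right ?_ h3
        nlinarith [sq_nonneg t]
  _ = ((1 + ‖(-(1 + w * stT μ w) / stT μ w : ℂ)‖) * (w.im)⁻¹) * (1 + t ^ 2) := by ring

lemma integrable_y (hint : Integrable (fun t : ℝ => t ^ 2) μ) (w : ℂ) (hw : 0 < w.im) :
    Integrable (yfun μ w) μ :=
  integrable_quad hint (cont_y w hw).aestronglyMeasurable (norm_y_quad w hw)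

lemma integral_t_res (hint : Integrable (fun t : ℝ => t ^ 2) μ) (w : ℂ) (hw : 0 < w.im) :
    ∫ t, (t:ℂ) * ((t:ℂ) - w)⁻¹ ∂μ = 1 + w * stT μ w := by
  have hpt : ∀ t : ℝ, (t:ℂ) * ((t:ℂ) - w)⁻¹ = 1 + w * ((t:ℂ) - w)⁻¹ := by
    intro t
    field_simp [sub_z_ne w hw t]
    ring
  rw [show (fun t : ℝ => (t:ℂ) * ((t:ℂ) - w)⁻¹) = fun t : ℝ => 1 + w * ((t:ℂ) - w)⁻¹
    from funext hpt]
  rw [integral_add (integrable_const 1) ((integrable_res w hw).const_mul w),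
    integral_const_mul, integral_const, probReal_univ]
  simp [stT]

lemma integral_y_zero (hint : Integrable (fun t : ℝ => t ^ 2) μ) (w : ℂ) (hw : 0 < w.im) :
    ∫ t, yfun μ w t ∂μ = 0 := by
  have hpt : ∀ t : ℝ, yfun μ w t
      = (t:ℂ) * ((t:ℂ) - w)⁻¹ + (-(1 + w * stT μ w) / stT μ w) * ((t:ℂ) - w)⁻¹ := by
    intro t; rw [yfun]; ring
  have hti : Integrable (fun t : ℝ => (t:ℂ) * ((t:ℂ) - w)⁻¹) μ := by
    refine integrable_quad hint
      ((Complex.continuous_ofReal.mul (cont_res w hw)).aestronglyMeasurable)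
      (C := (w.im)⁻¹) (fun t => ?_)
    rw [norm_mul, Complex.norm_real, Real.norm_eq_abs]
    have h1 := norm_res_le w hw t
    have h2 := abs_le_one_add_sq t
    have h3 : (0:ℝ) ≤ (w.im)⁻¹ := by positivity
    have h4 := abs_nonneg t
    nlinarith [norm_nonneg (((t:ℂ) - w)⁻¹)]
  rw [show yfun μ w = fun t : ℝ =>
      (t:ℂ) * ((t:ℂ) - w)⁻¹ + (-(1 + w * stT μ w) / stT μ w) * ((t:ℂ) - w)⁻¹
    from funext hpt]
  rw [integral_add hti (((integrable_res w hw)).const_mul _), integral_const_mul,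
    integral_t_res hint w hw]
  have hm := stT_ne (μ := μ) w hw
  show 1 + w * stT μ w + -(1 + w * stT μ w) / stT μ w * stT μ w = 0
  field_simp
  ring

lemma integrable_sq_shift (hint : Integrable (fun t : ℝ => t ^ 2) μ) (a : ℝ) :
    Integrable (fun t : ℝ => (t - a) ^ 2) μ := by
  refine integrable_quad hint ((continuous_id.sub continuous_const).pow 2).aestronglyMeasurable
    (C := (1 + |a|) ^ 2) (fun t => ?_)
  rw [Real.norm_eq_abs, _root_.abs_of_nonneg (sq_nonneg _)]
  have h1 : -(2*(a*t)) ≤ 2*(|a| * |t|) := by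
    have h1a := neg_abs_le (a*t)
    have h1b := abs_mul a t
    nlinarith [abs_nonneg (a*t)]
  have h2 : 2*(|a| * |t|) ≤ |a| * (1+t^2) := by
    nlinarith [sq_nonneg (|t|-1), abs_nonneg a, _root_.sq_abs t]
  nlinarith [_root_.sq_abs a, abs_nonneg a, sq_nonneg t]

lemma ybound (hint : Integrable (fun t : ℝ => t ^ 2) μ) (w : ℂ) (hw : 0 < w.im) :
    w.im ^ 2 * (∫ t, ‖yfun μ w t‖ ^ 2 ∂μ) ≤ ∫ t, (t - ∫ s, s ∂μ) ^ 2 ∂μ := by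
  set a : ℝ := ∫ s, s ∂μ with ha
  set β : ℂ := -(1 + w * stT μ w) / stT μ w with hβ
  set y : ℝ → ℂ := yfun μ w with hy
  set N : ℝ := ∫ t, ‖y t‖ ^ 2 ∂μ with hN
  set S : ℝ := ∫ t, (t - a) ^ 2 ∂μ with hS
  have hSnn : 0 ≤ S := integral_nonneg fun t => sq_nonneg _
  have hNnn : 0 ≤ N := integral_nonneg fun t => sq_nonneg _
  have hycont : Continuous y := cont_y w hw
  have hB : (0:ℝ) ≤ ‖β‖ := norm_nonneg _
  have hvi : (0:ℝ) ≤ (w.im)⁻¹ := by positivity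
  have hyle : ∀ t : ℝ, ‖y t‖ ≤ (|t| + ‖β‖) * (w.im)⁻¹ := norm_y_le w hw
  have hkey : ∀ t : ℝ, (|t| + ‖β‖)^2 ≤ (1 + ‖β‖)^2 * (1 + t^2) := by
    intro t
    have h2 := abs_le_one_add_sq t
    nlinarith [mul_le_mul_of_nonneg_left h2 (by positivity : (0:ℝ) ≤ 2*‖β‖),
      sq_nonneg t, mul_nonneg (mul_nonneg hB hB) (sq_nonneg t), abs_nonneg t, hB,
      _root_.sq_abs t]
  have hprod : ∀ u : ℝ, ∀ t : ℝ, 0 ≤ u →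
      (|t| + u) * (|t| + ‖β‖) ≤ ((1 + u) * (1 + ‖β‖)) * (1 + t^2) := by
    intro u t hu
    have h2 := abs_le_one_add_sq t
    nlinarith [mul_le_mul_of_nonneg_left h2 (by positivity : (0:ℝ) ≤ u + ‖β‖),
      sq_nonneg t, mul_nonneg (mul_nonneg hu hB) (sq_nonneg t), abs_nonneg t, hB,
      _root_.sq_abs t]
  -- integrability of ‖y‖²
  have hy2 : Integrable (fun t => ‖y t‖ ^ 2) μ := by
    refine integrable_quad hint ((hycont.norm.pow 2)).aestronglyMeasurable
      (C := ((1 + ‖β‖) * (w.im)⁻¹)^2) (fun t => ?_)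
    rw [Real.norm_eq_abs, _root_.abs_of_nonneg (sq_nonneg _)]
    have h1 := hyle t
    calc ‖y t‖^2 ≤ ((|t| + ‖β‖) * (w.im)⁻¹)^2 := pow_le_pow_left₀ (norm_nonneg _) h1 2
    _ = (|t| + ‖β‖)^2 * ((w.im)⁻¹)^2 := by ring
    _ ≤ ((1 + ‖β‖)^2 * (1 + t^2)) * ((w.im)⁻¹)^2 :=
        mul_le_mul_of_nonneg_right (hkey t) (sq_nonneg _)
    _ = ((1 + ‖β‖) * (w.im)⁻¹)^2 * (1 + t^2) := by ring
  -- pointwise identities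
  have hyw : ∀ t : ℝ, y t * ((t:ℂ) - w) = (t:ℂ) + β := by
    intro t
    rw [hy, yfun, ← hβ]
    field_simp [sub_z_ne w hw t]
  have hconjmul : ∀ t : ℝ, (starRingEnd ℂ) (y t) * ((t:ℂ) + β)
      = ((‖y t‖^2 : ℝ) : ℂ) * ((t:ℂ) - w) := by
    intro t
    rw [← hyw t, ← mul_assoc, mul_comm ((starRingEnd ℂ) (y t)) (y t), Complex.mul_conj]
    rw [Complex.normSq_eq_norm_sq]
  have him_pt : ∀ t : ℝ, ((t:ℂ) - (a:ℂ)) * (starRingEnd ℂ) (y t)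
      = ((‖y t‖^2 : ℝ) : ℂ) * ((t:ℂ) - w) - (β + (a:ℂ)) * (starRingEnd ℂ) (y t) := by
    intro t
    linear_combination hconjmul t
  -- integrability pieces
  have hnorm_ta : ∀ t : ℝ, ‖(t:ℂ) - (a:ℂ)‖ = |t - a| := by
    intro t
    rw [show (t:ℂ) - (a:ℂ) = ((t - a : ℝ) : ℂ) by push_cast; ring, Complex.norm_real,
      Real.norm_eq_abs]
  have hq_int : Integrable (fun t : ℝ => ((t:ℂ) - (a:ℂ)) * (starRingEnd ℂ) (y t)) μ := by
    refine integrable_quad hint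
      (((Complex.continuous_ofReal.sub continuous_const).mul
        (Complex.continuous_conj.comp hycont)).aestronglyMeasurable)
      (C := (1 + |a|) * ((1 + ‖β‖) * (w.im)⁻¹)) (fun t => ?_)
    rw [norm_mul, hnorm_ta t, RCLike.norm_conj]
    have h1 := hyle t
    have h3 : |t - a| ≤ |t| + |a| := abs_sub t a
    calc |t - a| * ‖y t‖ ≤ (|t| + |a|) * ((|t| + ‖β‖) * (w.im)⁻¹) :=
        mul_le_mul h3 h1 (norm_nonneg _) (by positivity)
    _ = ((|t| + |a|) * (|t| + ‖β‖)) * (w.im)⁻¹ := by ring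
    _ ≤ (((1 + |a|) * (1 + ‖β‖)) * (1 + t^2)) * (w.im)⁻¹ :=
        mul_le_mul_of_nonneg_right (hprod |a| t (abs_nonneg a)) hvi
    _ = (1 + |a|) * ((1 + ‖β‖) * (w.im)⁻¹) * (1 + t ^ 2) := by ring
  have hyw_int : Integrable (fun t : ℝ => ((‖y t‖^2 : ℝ) : ℂ) * ((t:ℂ) - w)) μ := by
    refine integrable_quad hint
      (((Complex.continuous_ofReal.comp (hycont.norm.pow 2)).mul
        (Complex.continuous_ofReal.sub continuous_const)).aestronglyMeasurable)
      (C := (1 + ‖β‖) * (w.im)⁻¹ * (1 + ‖β‖)) (fun t => ?_)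
    have h0 : ‖y t‖ * ‖(t:ℂ) - w‖ = ‖(t:ℂ) + β‖ := by rw [← norm_mul, hyw t]
    have h4 : ‖(t:ℂ) + β‖ ≤ |t| + ‖β‖ := norm_ofReal_add t β
    have h1 := hyle t
    have h2 := abs_le_one_add_sq t
    calc ‖((‖y t‖^2 : ℝ) : ℂ) * ((t:ℂ) - w)‖ = ‖y t‖^2 * ‖(t:ℂ) - w‖ := by
          rw [norm_mul, Complex.norm_real, Real.norm_eq_abs, _root_.abs_of_nonneg (sq_nonneg _)]
    _ = ‖y t‖ * (‖y t‖ * ‖(t:ℂ) - w‖) := by ring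
    _ = ‖y t‖ * ‖(t:ℂ) + β‖ := by rw [h0]
    _ ≤ ((|t| + ‖β‖) * (w.im)⁻¹) * (|t| + ‖β‖) := by
          exact mul_le_mul h1 h4 (norm_nonneg _) (by positivity)
    _ = ((|t| + ‖β‖) * (|t| + ‖β‖)) * (w.im)⁻¹ := by ring
    _ ≤ (((1 + ‖β‖) * (1 + ‖β‖)) * (1 + t^2)) * (w.im)⁻¹ :=
        mul_le_mul_of_nonneg_right (hprod ‖β‖ t hB) hvi
    _ = (1 + ‖β‖) * (w.im)⁻¹ * (1 + ‖β‖) * (1 + t ^ 2) := by ring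
  have h5 : Integrable (fun t : ℝ => (β + (a:ℂ)) * (starRingEnd ℂ) (y t)) μ := by
    have heq : (fun t : ℝ => (β + (a:ℂ)) * (starRingEnd ℂ) (y t))
        = fun t => ((‖y t‖^2 : ℝ) : ℂ) * ((t:ℂ) - w) - ((t:ℂ) - (a:ℂ)) * (starRingEnd ℂ) (y t) :=
      funext fun t => by linear_combination him_pt t
    rw [heq]
    exact hyw_int.sub hq_int
  -- the integral identity
  have hsplit : ∫ t, ((t:ℂ) - (a:ℂ)) * (starRingEnd ℂ) (y t) ∂μ
      = ∫ t, ((‖y t‖^2 : ℝ) : ℂ) * ((t:ℂ) - w) ∂μ := by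
    rw [show (fun t : ℝ => ((t:ℂ) - (a:ℂ)) * (starRingEnd ℂ) (y t))
        = fun t : ℝ => ((‖y t‖^2 : ℝ) : ℂ) * ((t:ℂ) - w) - (β + (a:ℂ)) * (starRingEnd ℂ) (y t)
      from funext him_pt]
    rw [integral_sub hyw_int h5, integral_const_mul, integral_conj, hy,
      integral_y_zero hint w hw]
    simp
  -- imaginary part
  have him : (∫ t, ((t:ℂ) - (a:ℂ)) * (starRingEnd ℂ) (y t) ∂μ).im = -(w.im * N) := by
    rw [hsplit]
    have hii := integral_im (μ := μ) (𝕜 := ℂ) hyw_int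
    simp only [RCLike.im_to_complex] at hii
    rw [← hii]
    rw [show (fun t : ℝ => (((‖y t‖^2 : ℝ) : ℂ) * ((t:ℂ) - w)).im)
        = fun t : ℝ => ‖y t‖^2 * (-w.im) from funext fun t => by
          rw [Complex.mul_im, Complex.ofReal_re, Complex.ofReal_im, Complex.sub_im,
            Complex.ofReal_im]
          ring]
    rw [integral_mul_const, ← hN]
    ring
  -- bound by the L¹ norm
  have hb1 : w.im * N ≤ ∫ t, |t - a| * ‖y t‖ ∂μ := by
    have h6 : w.im * N = -((∫ t, ((t:ℂ) - (a:ℂ)) * (starRingEnd ℂ) (y t) ∂μ).im) := by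
      rw [him]; ring
    rw [h6]
    refine le_trans (neg_le_abs _) (le_trans (Complex.abs_im_le_norm _) ?_)
    refine le_trans (norm_integral_le_integral_norm _) (le_of_eq (integral_congr_ae ?_))
    filter_upwards with t
    rw [norm_mul, hnorm_ta t, RCLike.norm_conj]
  -- Cauchy-Schwarz
  have hCS : ∫ t, |t - a| * ‖y t‖ ∂μ ≤ Real.sqrt S * Real.sqrt N := by
    have hconj : Real.HolderConjugate 2 2 := Real.HolderConjugate.two_two
    have hucont : Continuous (fun t : ℝ => ((t - a : ℝ) : ℂ)) :=
      Complex.continuous_ofReal.comp (continuous_id.sub continuous_const)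
    have hu2 : MemLp (fun t : ℝ => ((t - a : ℝ) : ℂ)) (ENNReal.ofReal 2) μ := by
      rw [ENNReal.ofReal_ofNat]
      refine (memLp_two_iff_integrable_sq_norm hucont.aestronglyMeasurable).2 ?_
      have : (fun t : ℝ => ‖((t - a : ℝ) : ℂ)‖ ^ 2) = fun t : ℝ => (t - a) ^ 2 := by
        funext t
        rw [Complex.norm_real, Real.norm_eq_abs, _root_.sq_abs]
      rw [this]
      exact integrable_sq_shift hint a
    have hy2' : MemLp y (ENNReal.ofReal 2) μ := by
      rw [ENNReal.ofReal_ofNat]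
      exact (memLp_two_iff_integrable_sq_norm hycont.aestronglyMeasurable).2 hy2
    have hH := integral_mul_norm_le_Lp_mul_Lq hconj hu2 hy2'
    have he1 : ∫ t, ‖((t - a : ℝ) : ℂ)‖ * ‖y t‖ ∂μ = ∫ t, |t - a| * ‖y t‖ ∂μ := by
      refine integral_congr_ae (Filter.Eventually.of_forall fun t => ?_)
      show ‖((t - a : ℝ) : ℂ)‖ * ‖y t‖ = |t - a| * ‖y t‖
      rw [Complex.norm_real, Real.norm_eq_abs]
    have he2 : ∫ t, ‖((t - a : ℝ) : ℂ)‖ ^ (2:ℝ) ∂μ = S := by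
      rw [hS]
      refine integral_congr_ae (Filter.Eventually.of_forall fun t => ?_)
      show ‖((t - a : ℝ) : ℂ)‖ ^ (2:ℝ) = (t - a)^2
      rw [Complex.norm_real, Real.norm_eq_abs, show (2:ℝ) = ((2:ℕ):ℝ) by norm_num,
        Real.rpow_natCast, _root_.sq_abs]
    have he3 : ∫ t, ‖y t‖ ^ (2:ℝ) ∂μ = N := by
      rw [hN]
      refine integral_congr_ae (Filter.Eventually.of_forall fun t => ?_)
      show ‖y t‖ ^ (2:ℝ) = ‖y t‖^2
      rw [show (2:ℝ) = ((2:ℕ):ℝ) by norm_num, Real.rpow_natCast]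
    rw [he1, he2, he3] at hH
    calc ∫ t, |t - a| * ‖y t‖ ∂μ ≤ S ^ (1/(2:ℝ)) * N ^ (1/(2:ℝ)) := hH
    _ = Real.sqrt S * Real.sqrt N := by rw [← Real.sqrt_eq_rpow, ← Real.sqrt_eq_rpow]
  -- conclude
  rcases eq_or_lt_of_le hNnn with h0 | hNpos
  · rw [← h0]
    simpa using hSnn
  · have h11 : w.im * N ≤ Real.sqrt S * Real.sqrt N := le_trans hb1 hCS
    have hsN : 0 < Real.sqrt N := Real.sqrt_pos.2 hNpos
    have hNs : Real.sqrt N * Real.sqrt N = N := Real.mul_self_sqrt hNnn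
    have h12 : w.im * Real.sqrt N ≤ Real.sqrt S := by nlinarith
    nlinarith [Real.sqrt_nonneg S, Real.mul_self_sqrt hSnn, mul_self_nonneg (w.im * Real.sqrt N)]
lemma quad_prod {b b' : ℝ} (hb : 0 ≤ b) (hb' : 0 ≤ b') (t : ℝ) :
    (|t| + b) * (|t| + b') ≤ ((1 + b) * (1 + b')) * (1 + t ^ 2) := by
  have h2 := abs_le_one_add_sq t
  nlinarith [mul_le_mul_of_nonneg_left h2 (by positivity : (0:ℝ) ≤ b + b'),
    sq_nonneg t, mul_nonneg (mul_nonneg hb hb') (sq_nonneg t), abs_nonneg t,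
    _root_.sq_abs t]

lemma integrable_norm_y_sq (hint : Integrable (fun t : ℝ => t ^ 2) μ)
    (w : ℂ) (hw : 0 < w.im) : Integrable (fun t => ‖yfun μ w t‖ ^ 2) μ := by
  set β : ℂ := -(1 + w * stT μ w) / stT μ w with hβ
  have hB : (0:ℝ) ≤ ‖β‖ := norm_nonneg _
  refine integrable_quad hint (((cont_y w hw).norm.pow 2)).aestronglyMeasurable
    (C := ((1 + ‖β‖) * (w.im)⁻¹)^2) (fun t => ?_)
  rw [Real.norm_eq_abs, _root_.abs_of_nonneg (sq_nonneg _)]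
  have h1 := norm_y_le (μ := μ) w hw t
  rw [← hβ] at h1
  calc ‖yfun μ w t‖^2 ≤ ((|t| + ‖β‖) * (w.im)⁻¹)^2 := pow_le_pow_left₀ (norm_nonneg _) h1 2
  _ = ((|t| + ‖β‖) * (|t| + ‖β‖)) * ((w.im)⁻¹)^2 := by ring
  _ ≤ (((1 + ‖β‖) * (1 + ‖β‖)) * (1 + t^2)) * ((w.im)⁻¹)^2 :=
      mul_le_mul_of_nonneg_right (quad_prod hB hB t) (sq_nonneg _)
  _ = ((1 + ‖β‖) * (w.im)⁻¹)^2 * (1 + t^2) := by ring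

lemma memLp2_y (hint : Integrable (fun t : ℝ => t ^ 2) μ) (w : ℂ) (hw : 0 < w.im) :
    MemLp (yfun μ w) (ENNReal.ofReal 2) μ := by
  rw [ENNReal.ofReal_ofNat]
  exact (memLp_two_iff_integrable_sq_norm (cont_y w hw).aestronglyMeasurable).2
    (integrable_norm_y_sq hint w hw)

lemma integrable_t_res (hint : Integrable (fun t : ℝ => t ^ 2) μ) (w : ℂ) (hw : 0 < w.im) :
    Integrable (fun t : ℝ => (t:ℂ) * ((t:ℂ) - w)⁻¹) μ := by
  refine integrable_quad hint
    ((Complex.continuous_ofReal.mul (cont_res w hw)).aestronglyMeasurable)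
    (C := (w.im)⁻¹) (fun t => ?_)
  rw [norm_mul, Complex.norm_real, Real.norm_eq_abs]
  have h1 := norm_res_le w hw t
  have h2 := abs_le_one_add_sq t
  have h3 : (0:ℝ) ≤ (w.im)⁻¹ := by positivity
  have h4 := abs_nonneg t
  nlinarith [norm_nonneg (((t:ℂ) - w)⁻¹)]



end SP

open SP in
theorem statement_9 (μ : Measure ℝ) [IsProbabilityMeasure μ]
    (hint : Integrable (fun t : ℝ => t ^ 2) μ)
    (σ2 : ℝ) (hσ2 : σ2 = (∫ t, t ^ 2 ∂μ) - (∫ t, t ∂μ) ^ 2) :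
    (∀ z z' : ℂ, 0 < z.im → 0 < z'.im → z ≠ z' →
        ‖(Ffun μ z - Ffun μ z') / (z - z') - 1‖ ≤ σ2 / (z.im * z'.im)) ∧
      ∀ z z' : ℂ, 0 < z.im → 0 < z'.im →
        ∃ τ : ℂ, Ffun μ z - Ffun μ z' = (z - z') * (1 + τ) ∧
          ‖τ‖ ≤ σ2 / (z.im * z'.im) := by
  have hid : Integrable (fun t : ℝ => t) μ := integrable_id hint
  have hSeq : ∫ t, (t - ∫ s, s ∂μ) ^ 2 ∂μ = σ2 := by
    rw [hσ2]
    rw [show (fun t : ℝ => (t - ∫ s, s ∂μ) ^ 2)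
        = fun t : ℝ => t^2 + ((-(2 * ∫ s, s ∂μ)) * t + (∫ s, s ∂μ)^2) from
      funext fun t => by ring]
    have i2 : Integrable (fun t : ℝ => (-(2 * ∫ s, s ∂μ)) * t + (∫ s, s ∂μ)^2) μ := by
      exact (hid.const_mul _).add (integrable_const _)
    have i3 : Integrable (fun t : ℝ => (-(2 * ∫ s, s ∂μ)) * t) μ := hid.const_mul _
    rw [integral_add hint i2, integral_add i3 (integrable_const _), integral_const_mul,
      integral_const, probReal_univ]
    simp
    ring
  have hσnn : 0 ≤ σ2 := by
    rw [← hSeq]; exact integral_nonneg fun t => sq_nonneg _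
  have main1 : ∀ z z' : ℂ, 0 < z.im → 0 < z'.im → z ≠ z' →
      ‖(Ffun μ z - Ffun μ z') / (z - z') - 1‖ ≤ σ2 / (z.im * z'.im) := by
    intro z z' hz hz' hne
    have hzz' : z - z' ≠ 0 := sub_ne_zero.mpr hne
    set m := stT μ z with hm
    set m' := stT μ z' with hm'
    have hmne : m ≠ 0 := stT_ne z hz
    have hm'ne : m' ≠ 0 := stT_ne z' hz'
    set f : ℝ → ℂ := fun t => ((t:ℂ) - z)⁻¹ with hf
    set g : ℝ → ℂ := fun t => ((t:ℂ) - z')⁻¹ with hg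
    set β : ℂ := -(1 + z * m) / m with hβ
    set β' : ℂ := -(1 + z' * m') / m' with hβ'
    have hB : (0:ℝ) ≤ ‖β‖ := norm_nonneg _
    have hB' : (0:ℝ) ≤ ‖β'‖ := norm_nonneg _
    have hf_int : Integrable f μ := integrable_res z hz
    have hg_int : Integrable g μ := integrable_res z' hz'
    have hfg_cont : Continuous (fun t => f t * g t) := (cont_res z hz).mul (cont_res z' hz')
    have hvv : (0:ℝ) < z.im * z'.im := mul_pos hz hz'
    have hfgb : ∀ t : ℝ, ‖f t * g t‖ ≤ (z.im)⁻¹ * (z'.im)⁻¹ := by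
      intro t
      rw [norm_mul]
      exact mul_le_mul (norm_res_le z hz t) (norm_res_le z' hz' t) (norm_nonneg _)
        (by positivity)
    have hfg_int : Integrable (fun t => f t * g t) μ := by
      refine integrable_quad hint hfg_cont.aestronglyMeasurable
        (C := (z.im)⁻¹ * (z'.im)⁻¹) (fun t => ?_)
      have := hfgb t
      nlinarith [sq_nonneg t, norm_nonneg (f t * g t), inv_nonneg.2 hz.le,
        inv_nonneg.2 hz'.le, mul_nonneg (inv_nonneg.2 hz.le) (inv_nonneg.2 hz'.le)]
    have htfg_int : Integrable (fun t : ℝ => (t:ℂ) * (f t * g t)) μ := by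
      refine integrable_quad hint
        ((Complex.continuous_ofReal.mul hfg_cont).aestronglyMeasurable)
        (C := (z.im)⁻¹ * (z'.im)⁻¹) (fun t => ?_)
      rw [norm_mul, Complex.norm_real, Real.norm_eq_abs]
      have h1 := hfgb t
      have h2 := abs_le_one_add_sq t
      nlinarith [abs_nonneg t, norm_nonneg (f t * g t), sq_nonneg t,
        mul_nonneg (inv_nonneg.2 hz.le) (inv_nonneg.2 hz'.le)]
    have ht2fg_int : Integrable (fun t : ℝ => (t:ℂ)^2 * (f t * g t)) μ := by
      refine integrable_quad hint
        (((Complex.continuous_ofReal.pow 2).mul hfg_cont).aestronglyMeasurable)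
        (C := (z.im)⁻¹ * (z'.im)⁻¹) (fun t => ?_)
      rw [norm_mul, norm_pow, Complex.norm_real, Real.norm_eq_abs]
      have h1 := hfgb t
      nlinarith [abs_nonneg t, norm_nonneg (f t * g t), sq_nonneg t, _root_.sq_abs t,
        mul_nonneg (inv_nonneg.2 hz.le) (inv_nonneg.2 hz'.le)]
    have htg_int : Integrable (fun t : ℝ => (t:ℂ) * g t) μ := integrable_t_res hint z' hz'
    set I : ℂ := ∫ t, f t * g t ∂μ with hI
    -- basic integral identities
    have hrel : m - m' = (z - z') * I := by
      have hpt : ∀ t : ℝ, f t - g t = (z - z') * (f t * g t) := by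
        intro t
        rw [hf, hg]
        field_simp [sub_z_ne z hz t, sub_z_ne z' hz' t]
        ring
      have h1 : m - m' = ∫ t, (f t - g t) ∂μ := by
        rw [hm, hm', stT, stT, integral_sub hf_int hg_int]
      rw [h1, show (fun t : ℝ => f t - g t) = fun t : ℝ => (z - z') * (f t * g t) from
        funext hpt, integral_const_mul, ← hI]
    have htg : ∫ t, (t:ℂ) * g t ∂μ = 1 + z' * m' := integral_t_res hint z' hz'
    have hT1 : ∫ t, (t:ℂ) * (f t * g t) ∂μ = m' + z * I := by
      have hpt : ∀ t : ℝ, (t:ℂ) * (f t * g t) = g t + z * (f t * g t) := by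
        intro t
        rw [hf, hg]
        field_simp [sub_z_ne z hz t, sub_z_ne z' hz' t]
        ring
      rw [show (fun t : ℝ => (t:ℂ) * (f t * g t))
          = fun t : ℝ => g t + z * (f t * g t) from funext hpt,
        integral_add hg_int (hfg_int.const_mul z), integral_const_mul, ← hI, hm', stT]
    have hT2 : ∫ t, (t:ℂ)^2 * (f t * g t) ∂μ = (1 + z' * m') + z * (m' + z * I) := by
      have hpt : ∀ t : ℝ, (t:ℂ)^2 * (f t * g t) = (t:ℂ) * g t + z * ((t:ℂ) * (f t * g t)) := by
        intro t
        rw [hf, hg]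
        field_simp [sub_z_ne z hz t, sub_z_ne z' hz' t]
        ring
      rw [show (fun t : ℝ => (t:ℂ)^2 * (f t * g t))
          = fun t : ℝ => (t:ℂ) * g t + z * ((t:ℂ) * (f t * g t)) from funext hpt,
        integral_add htg_int (htfg_int.const_mul z), integral_const_mul, htg, hT1]
    -- the auxiliary functions
    set yz : ℝ → ℂ := fun t => ((t:ℂ) + β) * f t with hyz
    set yz' : ℝ → ℂ := fun t => ((t:ℂ) + β') * g t with hyz'
    have hyzfun : yfun μ z = yz := rfl
    have hyz'fun : yfun μ z' = yz' := rfl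
    have hyzb : ∀ t : ℝ, ‖yz t‖ ≤ (|t| + ‖β‖) * (z.im)⁻¹ := by
      intro t
      rw [show yz t = yfun μ z t from rfl]
      exact norm_y_le z hz t
    have hyz'b : ∀ t : ℝ, ‖yz' t‖ ≤ (|t| + ‖β'‖) * (z'.im)⁻¹ := by
      intro t
      rw [show yz' t = yfun μ z' t from rfl]
      exact norm_y_le z' hz' t
    have hyy_int : Integrable (fun t => yz t * yz' t) μ := by
      refine integrable_quad hint
        (((cont_y z hz).mul (cont_y z' hz')).aestronglyMeasurable)
        (C := ((1 + ‖β‖) * (1 + ‖β'‖)) * ((z.im)⁻¹ * (z'.im)⁻¹)) (fun t => ?_)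
      rw [norm_mul]
      calc ‖yz t‖ * ‖yz' t‖ ≤ ((|t| + ‖β‖) * (z.im)⁻¹) * ((|t| + ‖β'‖) * (z'.im)⁻¹) :=
            mul_le_mul (hyzb t) (hyz'b t) (norm_nonneg _) (by positivity)
      _ = ((|t| + ‖β‖) * (|t| + ‖β'‖)) * ((z.im)⁻¹ * (z'.im)⁻¹) := by ring
      _ ≤ (((1 + ‖β‖) * (1 + ‖β'‖)) * (1 + t^2)) * ((z.im)⁻¹ * (z'.im)⁻¹) :=
            mul_le_mul_of_nonneg_right (quad_prod hB hB' t) (by positivity)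
      _ = ((1 + ‖β‖) * (1 + ‖β'‖)) * ((z.im)⁻¹ * (z'.im)⁻¹) * (1 + t ^ 2) := by ring
    -- value of the key integral
    have hJpt : ∀ t : ℝ, yz t * yz' t
        = (t:ℂ)^2 * (f t * g t) + (β + β') * ((t:ℂ) * (f t * g t))
          + (β * β') * (f t * g t) := by
      intro t
      rw [hyz, hyz', hf, hg]
      ring
    have hJ : ∫ t, yz t * yz' t ∂μ
        = ((1 + z' * m') + z * (m' + z * I)) + (β + β') * (m' + z * I) + (β * β') * I := by
      rw [show (fun t : ℝ => yz t * yz' t)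
          = fun t : ℝ => (t:ℂ)^2 * (f t * g t) + (β + β') * ((t:ℂ) * (f t * g t))
            + (β * β') * (f t * g t) from funext hJpt]
      have i1 : Integrable (fun t : ℝ => (t:ℂ)^2 * (f t * g t)
          + (β + β') * ((t:ℂ) * (f t * g t))) μ := by
        exact ht2fg_int.add (htfg_int.const_mul _)
      have i2 : Integrable (fun t : ℝ => (β + β') * ((t:ℂ) * (f t * g t))) μ :=
        htfg_int.const_mul _
      rw [integral_add i1 (hfg_int.const_mul _), integral_add ht2fg_int i2,
        integral_const_mul, integral_const_mul, hT2, hT1, ← hI]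
    have hF : Ffun μ z = -m⁻¹ := by rw [Ffun, ← hm]
    have hF' : Ffun μ z' = -m'⁻¹ := by rw [Ffun, ← hm']
    have hΔ : (Ffun μ z - Ffun μ z') / (z - z') - 1 = ∫ t, yz t * yz' t ∂μ := by
      rw [hJ, hF, hF', hβ, hβ']
      rw [sub_eq_iff_eq_add, div_eq_iff hzz']
      field_simp
      linear_combination (1 - m' * (z - z')) * hrel
    -- Cauchy–Schwarz and the variance bound
    have hconj : Real.HolderConjugate 2 2 := Real.HolderConjugate.two_two
    set N : ℝ := ∫ t, ‖yz t‖ ^ 2 ∂μ with hN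
    set N' : ℝ := ∫ t, ‖yz' t‖ ^ 2 ∂μ with hN'
    have hNnn : 0 ≤ N := integral_nonneg fun t => sq_nonneg _
    have hN'nn : 0 ≤ N' := integral_nonneg fun t => sq_nonneg _
    have hNb : z.im ^ 2 * N ≤ σ2 := by
      have := ybound hint z hz
      rw [hyzfun, hSeq] at this
      exact this
    have hN'b : z'.im ^ 2 * N' ≤ σ2 := by
      have := ybound hint z' hz'
      rw [hyz'fun, hSeq] at this
      exact this
    have hCS : ∫ t, ‖yz t‖ * ‖yz' t‖ ∂μ ≤ Real.sqrt N * Real.sqrt N' := by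
      have hH := integral_mul_norm_le_Lp_mul_Lq hconj
        (hyzfun ▸ memLp2_y hint z hz) (hyz'fun ▸ memLp2_y hint z' hz')
      have he2 : ∫ t, ‖yz t‖ ^ (2:ℝ) ∂μ = N := by
        refine integral_congr_ae (Filter.Eventually.of_forall fun t => ?_)
        show ‖yz t‖ ^ (2:ℝ) = ‖yz t‖ ^ 2
        rw [show (2:ℝ) = ((2:ℕ):ℝ) by norm_num, Real.rpow_natCast]
      have he3 : ∫ t, ‖yz' t‖ ^ (2:ℝ) ∂μ = N' := by
        refine integral_congr_ae (Filter.Eventually.of_forall fun t => ?_)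
        show ‖yz' t‖ ^ (2:ℝ) = ‖yz' t‖ ^ 2
        rw [show (2:ℝ) = ((2:ℕ):ℝ) by norm_num, Real.rpow_natCast]
      rw [he2, he3] at hH
      calc ∫ t, ‖yz t‖ * ‖yz' t‖ ∂μ ≤ N ^ (1/(2:ℝ)) * N' ^ (1/(2:ℝ)) := hH
      _ = Real.sqrt N * Real.sqrt N' := by rw [← Real.sqrt_eq_rpow, ← Real.sqrt_eq_rpow]
    have hsN : Real.sqrt N ≤ Real.sqrt σ2 / z.im := by
      have h1 : N ≤ (Real.sqrt σ2 / z.im) ^ 2 := by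
        rw [div_pow, Real.sq_sqrt hσnn, le_div_iff₀ (by positivity)]
        linarith [hNb]
      calc Real.sqrt N ≤ Real.sqrt ((Real.sqrt σ2 / z.im) ^ 2) := Real.sqrt_le_sqrt h1
      _ = Real.sqrt σ2 / z.im := Real.sqrt_sq (by positivity)
    have hsN' : Real.sqrt N' ≤ Real.sqrt σ2 / z'.im := by
      have h1 : N' ≤ (Real.sqrt σ2 / z'.im) ^ 2 := by
        rw [div_pow, Real.sq_sqrt hσnn, le_div_iff₀ (by positivity)]
        linarith [hN'b]
      calc Real.sqrt N' ≤ Real.sqrt ((Real.sqrt σ2 / z'.im) ^ 2) := Real.sqrt_le_sqrt h1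
      _ = Real.sqrt σ2 / z'.im := Real.sqrt_sq (by positivity)
    calc ‖(Ffun μ z - Ffun μ z') / (z - z') - 1‖
        = ‖∫ t, yz t * yz' t ∂μ‖ := by rw [hΔ]
    _ ≤ ∫ t, ‖yz t * yz' t‖ ∂μ := by
        exact norm_integral_le_integral_norm _
    _ = ∫ t, ‖yz t‖ * ‖yz' t‖ ∂μ := by
        refine integral_congr_ae (Filter.Eventually.of_forall fun t => ?_)
        exact norm_mul _ _
    _ ≤ Real.sqrt N * Real.sqrt N' := hCS
    _ ≤ (Real.sqrt σ2 / z.im) * (Real.sqrt σ2 / z'.im) :=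
        mul_le_mul hsN hsN' (Real.sqrt_nonneg _) (by positivity)
    _ = σ2 / (z.im * z'.im) := by
        rw [div_mul_div_comm, Real.mul_self_sqrt hσnn]
  refine ⟨main1, fun z z' hz hz' => ?_⟩
  by_cases hne : z = z'
  · refine ⟨0, by rw [hne]; ring, ?_⟩
    simpa using div_nonneg hσnn (mul_pos hz hz').le
  · refine ⟨(Ffun μ z - Ffun μ z') / (z - z') - 1, ?_, main1 z z' hz hz' hne⟩
    have hzz' : z - z' ≠ 0 := sub_ne_zero.mpr hne
    field_simp
    ring
end
end

section
/- Let μ be a Borel probability measure on ℝ with finite second moment and variance σ² > 0. If ω ∈ ℂ⁺ satisfies Im ω > 2σ, then there exists z ∈ ℂ⁺ with Im z ≥ k(Im ω / σ)·σ such that F_μ(z) = ω, where k(t) = (t + √(t² − 4))/2. -/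
open MeasureTheory

noncomputable section

/-- `k(t) = (t + √(t² − 4))/2`. -/
def kfun (t : ℝ) : ℝ := (t + Real.sqrt (t ^ 2 - 4)) / 2

namespace SProof

variable {μ : Measure ℝ} [IsProbabilityMeasure μ]




lemma sub_ne (z : ℂ) (hz : 0 < z.im) (t : ℝ) : (t : ℂ) - z ≠ 0 := by
  intro h
  have : ((t : ℂ) - z).im = 0 := by rw [h]; simp
  simp [Complex.sub_im] at this
  linarith

lemma normsq_eq (w : ℂ) : ‖w‖ ^ 2 = w.re ^ 2 + w.im ^ 2 := by
  rw [Complex.sq_norm, Complex.normSq_apply]; ring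

lemma norm_coe (r : ℝ) : ‖(r : ℂ)‖ = |r| := by
  rw [Complex.norm_real, Real.norm_eq_abs]

lemma norm_u_le (z : ℂ) (hz : 0 < z.im) (t : ℝ) : ‖((t : ℂ) - z)⁻¹‖ ≤ z.im⁻¹ := by
  rw [norm_inv]
  apply inv_anti₀ hz
  calc z.im = |((t : ℂ) - z).im| := by
        simp [Complex.sub_im, abs_of_pos hz]
    _ ≤ ‖(t : ℂ) - z‖ := Complex.abs_im_le_norm _
    _ = ‖(t : ℂ) - z‖ := rfl

lemma integrable_of_bound (f : ℝ → ℂ) (hf : AEStronglyMeasurable f μ) (C : ℝ)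
    (h : ∀ t, ‖f t‖ ≤ C) : Integrable f μ :=
  Integrable.mono' (integrable_const C) hf (Filter.Eventually.of_forall h)

lemma cont_u (z : ℂ) (hz : 0 < z.im) : Continuous (fun t : ℝ => ((t : ℂ) - z)⁻¹) := by
  apply Continuous.inv₀
  · exact (Complex.continuous_ofReal.sub continuous_const)
  · exact fun t => sub_ne z hz t

lemma int_u (z : ℂ) (hz : 0 < z.im) : Integrable (fun t : ℝ => ((t : ℂ) - z)⁻¹) μ :=
  integrable_of_bound _ ((cont_u z hz).aestronglyMeasurable) z.im⁻¹ (norm_u_le z hz)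

lemma int_abs_t (hint : Integrable (fun t : ℝ => t ^ 2) μ) : Integrable (fun t : ℝ => t) μ := by
  apply Integrable.mono' (hint.add (integrable_const 1))
  · exact measurable_id.aestronglyMeasurable
  · apply Filter.Eventually.of_forall
    intro t
    have : ‖t‖ = |t| := rfl
    rw [this]
    show |t| ≤ t ^ 2 + 1
    nlinarith [sq_nonneg (|t| - 1), sq_abs t, abs_nonneg t]

/-- Cauchy-Schwarz for real integrals. -/
lemma cs_real (f g : ℝ → ℝ) (hf : Integrable (fun t => f t ^ 2) μ)
    (hg : Integrable (fun t => g t ^ 2) μ) (hfg : Integrable (fun t => f t * g t) μ) :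
    (∫ t, f t * g t ∂μ) ^ 2 ≤ (∫ t, f t ^ 2 ∂μ) * (∫ t, g t ^ 2 ∂μ) := by
  have key : ∀ lam : ℝ, 0 ≤ (∫ t, f t ^ 2 ∂μ) * (lam * lam) + (2 * ∫ t, f t * g t ∂μ) * lam
      + (∫ t, g t ^ 2 ∂μ) := by
    intro lam
    have h1 : Integrable (fun t => lam ^ 2 * f t ^ 2) μ := hf.const_mul _
    have h2 : Integrable (fun t => 2 * lam * (f t * g t)) μ := hfg.const_mul _
    have h3 : Integrable (fun t => lam ^ 2 * f t ^ 2 + 2 * lam * (f t * g t)) μ := h1.add h2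
    have hid : ∀ t, (lam * f t + g t) ^ 2
        = lam ^ 2 * f t ^ 2 + 2 * lam * (f t * g t) + g t ^ 2 := by intro t; ring
    have h0 : 0 ≤ ∫ t, (lam * f t + g t) ^ 2 ∂μ :=
      integral_nonneg fun t => sq_nonneg _
    rw [integral_congr_ae (Filter.Eventually.of_forall hid)] at h0
    rw [integral_add h3 hg, integral_add h1 h2, integral_const_mul, integral_const_mul] at h0
    nlinarith [h0]
  have := discrim_le_zero key
  rw [discrim] at this
  nlinarith [this]

/-- Cauchy-Schwarz for complex integrals. -/
lemma cs_complex (f g : ℝ → ℂ) (hf : Integrable (fun t => ‖f t‖ ^ 2) μ)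
    (hg : Integrable (fun t => ‖g t‖ ^ 2) μ) (hfg : Integrable (fun t => f t * g t) μ) :
    ‖∫ t, f t * g t ∂μ‖ ^ 2 ≤ (∫ t, ‖f t‖ ^ 2 ∂μ) * (∫ t, ‖g t‖ ^ 2 ∂μ) := by
  have h1 : ‖∫ t, f t * g t ∂μ‖ ≤ ∫ t, ‖f t‖ * ‖g t‖ ∂μ := by
    calc ‖∫ t, f t * g t ∂μ‖ ≤ ∫ t, ‖f t * g t‖ ∂μ := norm_integral_le_integral_norm _
      _ = ∫ t, ‖f t‖ * ‖g t‖ ∂μ := by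
          apply integral_congr_ae (Filter.Eventually.of_forall fun t => norm_mul _ _)
  have h2 : (∫ t, ‖f t‖ * ‖g t‖ ∂μ) ^ 2 ≤ (∫ t, ‖f t‖ ^ 2 ∂μ) * (∫ t, ‖g t‖ ^ 2 ∂μ) := by
    apply cs_real _ _ hf hg
    have := hfg.norm
    simpa [norm_mul] using this
  have h3 : 0 ≤ ∫ t, ‖f t‖ * ‖g t‖ ∂μ :=
    integral_nonneg fun t => mul_nonneg (norm_nonneg _) (norm_nonneg _)
  nlinarith [norm_nonneg (∫ t, f t * g t ∂μ)]

lemma im_stT_pos (z : ℂ) (hz : 0 < z.im) : 0 < (stT μ z).im := by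
  have hu := int_u (μ := μ) z hz
  have h1 := (integral_im hu).symm
  simp only [RCLike.im_to_complex] at h1
  rw [show stT μ z = ∫ t, ((t : ℂ) - z)⁻¹ ∂μ from rfl, h1]
  have h2 : ∀ t : ℝ, (((t : ℂ) - z)⁻¹).im = z.im / Complex.normSq ((t : ℂ) - z) := by
    intro t
    rw [Complex.inv_im]
    simp [Complex.sub_im]
  rw [integral_congr_ae (Filter.Eventually.of_forall h2)]
  rw [integral_pos_iff_support_of_nonneg]
  · have : (Function.support fun t : ℝ => z.im / Complex.normSq ((t : ℂ) - z)) = Set.univ := by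
      ext t
      simp only [Function.mem_support, Set.mem_univ, iff_true]
      have := Complex.normSq_pos.2 (sub_ne z hz t)
      positivity
    rw [this]
    simp [IsProbabilityMeasure.ne_zero]
  · intro t
    have := Complex.normSq_pos.2 (sub_ne z hz t)
    positivity
  · apply Integrable.congr hu.im
    exact Filter.Eventually.of_forall h2

lemma stT_ne (z : ℂ) (hz : 0 < z.im) : stT μ z ≠ 0 := by
  intro h
  have := im_stT_pos (μ := μ) z hz
  rw [h] at this
  simp at this

/-- The key variance estimate: `y² ∫‖u - m‖² ≤ σ² ‖m‖²`. -/
lemma key_est (hint : Integrable (fun t : ℝ => t ^ 2) μ) (z : ℂ) (hz : 0 < z.im) :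
    z.im ^ 2 * ∫ t, ‖((t : ℂ) - z)⁻¹ - stT μ z‖ ^ 2 ∂μ ≤
      ((∫ t, t ^ 2 ∂μ) - (∫ t, t ∂μ) ^ 2) * ‖stT μ z‖ ^ 2 := by
  set m := stT μ z with hm
  set x := z.re with hx
  set y := z.im with hy
  set m1 := ∫ t, t ∂μ with hm1
  set m2 := ∫ t, t ^ 2 ∂μ with hm2
  have hu := int_u (μ := μ) z hz
  have hti := int_abs_t (μ := μ) hint
  have humi : Integrable (fun t : ℝ => ((t : ℂ) - z)⁻¹ - m) μ := hu.sub (integrable_const m)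
  have humc : Continuous (fun t : ℝ => ((t : ℂ) - z)⁻¹ - m) := (cont_u z hz).sub continuous_const
  have hbd : ∀ t : ℝ, ‖((t : ℂ) - z)⁻¹ - m‖ ≤ y⁻¹ + ‖m‖ := fun t =>
    (norm_sub_le _ _).trans (add_le_add_left (norm_u_le z hz t) _)
  have hsqi : Integrable (fun t : ℝ => ‖((t : ℂ) - z)⁻¹ - m‖ ^ 2) μ := by
    apply Integrable.mono' (integrable_const ((y⁻¹ + ‖m‖) ^ 2))
      ((humc.norm.pow 2).aestronglyMeasurable)
    apply Filter.Eventually.of_forall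
    intro t
    rw [Real.norm_eq_abs, abs_of_nonneg (sq_nonneg _)]
    exact pow_le_pow_left₀ (norm_nonneg _) (hbd t) 2
  have hquadi : Integrable (fun t : ℝ => (t - x) ^ 2) μ := by
    have : (fun t : ℝ => (t - x) ^ 2) = fun t => t ^ 2 + ((-2 * x) * t + x ^ 2) := by
      funext t; ring
    rw [this]
    exact hint.add ((hti.const_mul _).add (integrable_const _))
  have hg2i : Integrable (fun t : ℝ => (t - x) ^ 2 * ‖((t : ℂ) - z)⁻¹ - m‖ ^ 2) μ := by
    apply Integrable.mono' (hquadi.mul_const ((y⁻¹ + ‖m‖) ^ 2))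
    · exact (((continuous_id.sub continuous_const).pow 2).mul (humc.norm.pow 2)).aestronglyMeasurable
    · apply Filter.Eventually.of_forall
      intro t
      rw [Real.norm_eq_abs, abs_of_nonneg (by positivity)]
      apply mul_le_mul_of_nonneg_left _ (by positivity)
      exact pow_le_pow_left₀ (norm_nonneg _) (hbd t) 2
  have hWn : ∀ t : ℝ, ‖1 - ((t : ℂ) - z) * m‖ ^ 2
      = ((t - x) ^ 2 + y ^ 2) * ‖((t : ℂ) - z)⁻¹ - m‖ ^ 2 := by
    intro t
    have h1 : (1 : ℂ) - ((t : ℂ) - z) * m = ((t : ℂ) - z) * (((t : ℂ) - z)⁻¹ - m) := by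
      rw [mul_sub, mul_inv_cancel₀ (sub_ne z hz t)]
    rw [h1, norm_mul, mul_pow]
    congr 1
    rw [normsq_eq]
    simp only [Complex.sub_re, Complex.sub_im, Complex.ofReal_re, Complex.ofReal_im]
    ring
  have hWi : Integrable (fun t : ℝ => ‖1 - ((t : ℂ) - z) * m‖ ^ 2) μ := by
    have heq : (fun t : ℝ => ‖1 - ((t : ℂ) - z) * m‖ ^ 2)
        = fun t : ℝ => (t - x) ^ 2 * ‖((t : ℂ) - z)⁻¹ - m‖ ^ 2
          + y ^ 2 * ‖((t : ℂ) - z)⁻¹ - m‖ ^ 2 := by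
      funext t; rw [hWn t]; ring
    rw [heq]
    exact hg2i.add (hsqi.const_mul _)
  -- value of ∫ ‖W‖²
  have hpoly : ∀ t : ℝ, ‖1 - ((t : ℂ) - z) * m‖ ^ 2 =
      (1 + 2 * x * m.re - 2 * y * m.im + (x ^ 2 + y ^ 2) * (m.re ^ 2 + m.im ^ 2))
        + (-2 * m.re - 2 * x * (m.re ^ 2 + m.im ^ 2)) * t + (m.re ^ 2 + m.im ^ 2) * t ^ 2 := by
    intro t
    rw [normsq_eq]
    simp only [Complex.sub_re, Complex.sub_im, Complex.one_re, Complex.one_im, Complex.mul_re,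
      Complex.mul_im, Complex.ofReal_re, Complex.ofReal_im]
    ring
  have hWval : ∫ t, ‖1 - ((t : ℂ) - z) * m‖ ^ 2 ∂μ =
      (1 + 2 * x * m.re - 2 * y * m.im + (x ^ 2 + y ^ 2) * (m.re ^ 2 + m.im ^ 2))
        + (-2 * m.re - 2 * x * (m.re ^ 2 + m.im ^ 2)) * m1 + (m.re ^ 2 + m.im ^ 2) * m2 := by
    rw [integral_congr_ae (Filter.Eventually.of_forall hpoly)]
    have e1 : Integrable (fun t : ℝ =>
        (1 + 2 * x * m.re - 2 * y * m.im + (x ^ 2 + y ^ 2) * (m.re ^ 2 + m.im ^ 2))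
          + (-2 * m.re - 2 * x * (m.re ^ 2 + m.im ^ 2)) * t) μ := by
      exact (integrable_const _).add (hti.const_mul _)
    have e2 : Integrable (fun t : ℝ => (m.re ^ 2 + m.im ^ 2) * t ^ 2) μ := by
      exact hint.const_mul _
    have e3 : Integrable (fun t : ℝ => (-2 * m.re - 2 * x * (m.re ^ 2 + m.im ^ 2)) * t) μ := by
      exact hti.const_mul _
    rw [integral_add e1 e2, integral_add (integrable_const _) e3, integral_const_mul,
      integral_const_mul, integral_const]
    simp [measure_univ]
    rfl
  -- representation of A as an integral
  have hxui : Integrable (fun t : ℝ => ((t : ℂ) - (x : ℝ)) * (((t : ℂ) - z)⁻¹ - m)) μ := by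
    apply Integrable.mono' (((hti.sub (integrable_const x)).abs).mul_const (y⁻¹ + ‖m‖))
    · exact ((Complex.continuous_ofReal.sub continuous_const).mul humc).aestronglyMeasurable
    · apply Filter.Eventually.of_forall
      intro t
      rw [norm_mul]
      have h1 : ‖((t : ℂ) - (x : ℝ))‖ = |t - x| := by
        rw [show ((t : ℂ) - (x : ℝ)) = (((t - x : ℝ)) : ℂ) by push_cast; ring, norm_coe]
      rw [h1]
      exact mul_le_mul (le_refl _) (hbd t) (norm_nonneg _) (abs_nonneg _)
  have hxurepr : ∫ t, ((t : ℂ) - (x : ℝ)) * (((t : ℂ) - z)⁻¹ - m) ∂μ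
      = 1 + (z - (m1 : ℝ)) * m := by
    have hpt : ∀ t : ℝ, ((t : ℂ) - (x : ℝ)) * (((t : ℂ) - z)⁻¹ - m)
        = (1 + (z - (x : ℝ)) * ((t : ℂ) - z)⁻¹) - ((t : ℂ) * m - (x : ℝ) * m) := by
      intro t
      have h2 : ((t : ℂ) - z) * ((t : ℂ) - z)⁻¹ = 1 := mul_inv_cancel₀ (sub_ne z hz t)
      have h3 : ((t : ℂ) - (x : ℝ)) * (((t : ℂ) - z)⁻¹ - m)
          = ((t : ℂ) - z) * ((t : ℂ) - z)⁻¹ + (z - (x : ℝ)) * ((t : ℂ) - z)⁻¹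
            - ((t : ℂ) * m - (x : ℝ) * m) := by ring
      rw [h3, h2]
    rw [integral_congr_ae (Filter.Eventually.of_forall hpt)]
    have I1 : Integrable (fun t : ℝ => 1 + (z - (x : ℝ)) * ((t : ℂ) - z)⁻¹) μ :=
      (integrable_const _).add (hu.const_mul _)
    have I2 : Integrable (fun t : ℝ => (t : ℂ) * m) μ := hti.ofReal.mul_const m
    have I3 : Integrable (fun t : ℝ => (t : ℂ) * m - (x : ℝ) * m) μ := I2.sub (integrable_const _)
    have hcoe : (∫ t : ℝ, (t : ℂ) ∂μ) = ((m1 : ℝ) : ℂ) := by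
      rw [hm1]; exact integral_ofReal
    rw [integral_sub I1 I3, integral_sub I2 (integrable_const _),
      integral_add (integrable_const _) (hu.const_mul _), integral_const_mul,
      integral_mul_const, hcoe, integral_const, integral_const]
    simp only [measure_univ, ENNReal.toReal_one, probReal_univ, one_smul, smul_eq_mul]
    have hmm : (∫ a : ℝ, ((a : ℂ) - z)⁻¹ ∂μ) = m := rfl
    rw [hmm]
    ring
  -- Cauchy-Schwarz step
  have hfint : Integrable (fun t : ℝ => |t - x| * ‖((t : ℂ) - z)⁻¹ - m‖) μ := by
    apply Integrable.mono' (((hti.sub (integrable_const x)).abs).mul_const (y⁻¹ + ‖m‖))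
    · exact (((continuous_id.sub continuous_const).abs).mul humc.norm).aestronglyMeasurable
    · apply Filter.Eventually.of_forall
      intro t
      rw [Real.norm_eq_abs, abs_of_nonneg (by positivity)]
      exact mul_le_mul (le_refl _) (hbd t) (norm_nonneg _) (abs_nonneg _)
  have hnormA : ‖(1 : ℂ) + (z - (m1 : ℝ)) * m‖ ≤ ∫ t, |t - x| * ‖((t : ℂ) - z)⁻¹ - m‖ ∂μ := by
    rw [← hxurepr]
    calc ‖∫ t, ((t : ℂ) - (x : ℝ)) * (((t : ℂ) - z)⁻¹ - m) ∂μ‖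
        ≤ ∫ t, ‖((t : ℂ) - (x : ℝ)) * (((t : ℂ) - z)⁻¹ - m)‖ ∂μ := norm_integral_le_integral_norm _
      _ = ∫ t, |t - x| * ‖((t : ℂ) - z)⁻¹ - m‖ ∂μ := by
          apply integral_congr_ae (Filter.Eventually.of_forall _)
          intro t
          rw [norm_mul, show ((t : ℂ) - (x : ℝ)) = (((t - x : ℝ)) : ℂ) by push_cast; ring, norm_coe]
  have hsqcs : (∫ t, |t - x| * ‖((t : ℂ) - z)⁻¹ - m‖ ∂μ) ^ 2
      ≤ ∫ t, (t - x) ^ 2 * ‖((t : ℂ) - z)⁻¹ - m‖ ^ 2 ∂μ := by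
    have hf2 : Integrable (fun t : ℝ => (|t - x| * ‖((t : ℂ) - z)⁻¹ - m‖) ^ 2) μ := by
      apply hg2i.congr
      apply Filter.Eventually.of_forall
      intro t
      simp only [mul_pow, sq_abs]
    have := cs_real (μ := μ) (fun t => |t - x| * ‖((t : ℂ) - z)⁻¹ - m‖) (fun _ => 1) hf2
      (by simpa using integrable_const (μ := μ) (1 : ℝ))
      (by simpa using hfint)
    simp only [mul_one, one_pow, integral_const, measure_univ, ENNReal.toReal_one, probReal_univ, smul_eq_mul] at this
    calc (∫ t, |t - x| * ‖((t : ℂ) - z)⁻¹ - m‖ ∂μ) ^ 2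
        ≤ ∫ t, (|t - x| * ‖((t : ℂ) - z)⁻¹ - m‖) ^ 2 ∂μ := by
          convert this using 2 <;> simp
      _ = ∫ t, (t - x) ^ 2 * ‖((t : ℂ) - z)⁻¹ - m‖ ^ 2 ∂μ := by
          apply integral_congr_ae (Filter.Eventually.of_forall _)
          intro t
          simp only [mul_pow, sq_abs]
  have hA2 : ‖(1 : ℂ) + (z - (m1 : ℝ)) * m‖ ^ 2
      ≤ ∫ t, (t - x) ^ 2 * ‖((t : ℂ) - z)⁻¹ - m‖ ^ 2 ∂μ :=
    le_trans (pow_le_pow_left₀ (norm_nonneg _) hnormA 2) hsqcs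
  -- final assembly
  have hsplit : y ^ 2 * ∫ t, ‖((t : ℂ) - z)⁻¹ - m‖ ^ 2 ∂μ
      = (∫ t, ‖1 - ((t : ℂ) - z) * m‖ ^ 2 ∂μ)
        - ∫ t, (t - x) ^ 2 * ‖((t : ℂ) - z)⁻¹ - m‖ ^ 2 ∂μ := by
    rw [← integral_const_mul]
    rw [← integral_sub hWi hg2i]
    apply integral_congr_ae (Filter.Eventually.of_forall _)
    intro t
    rw [hWn t]
    ring
  have hAexp : ‖(1 : ℂ) + (z - (m1 : ℝ)) * m‖ ^ 2
      = (1 + (x - m1) * m.re - y * m.im) ^ 2 + ((x - m1) * m.im + y * m.re) ^ 2 := by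
    rw [normsq_eq]
    simp only [Complex.add_re, Complex.add_im, Complex.one_re, Complex.one_im, Complex.mul_re,
      Complex.mul_im, Complex.sub_re, Complex.sub_im, Complex.ofReal_re, Complex.ofReal_im]
    ring
  have hmn : ‖m‖ ^ 2 = m.re ^ 2 + m.im ^ 2 := normsq_eq m
  rw [hmn, hsplit]
  have : (∫ t, ‖1 - ((t : ℂ) - z) * m‖ ^ 2 ∂μ) - ‖(1 : ℂ) + (z - (m1 : ℝ)) * m‖ ^ 2
      = (m2 - m1 ^ 2) * (m.re ^ 2 + m.im ^ 2) := by
    rw [hWval, hAexp]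
    ring
  linarith [hA2]

lemma var_eq (hint : Integrable (fun t : ℝ => t ^ 2) μ) :
    ∫ t, (t - ∫ s, s ∂μ) ^ 2 ∂μ = (∫ t, t ^ 2 ∂μ) - (∫ t, t ∂μ) ^ 2 := by
  have hti := int_abs_t (μ := μ) hint
  set m1 := ∫ s, s ∂μ with hm1
  have hpt : ∀ t : ℝ, (t - m1) ^ 2 = (m1 ^ 2 + (-2 * m1) * t) + t ^ 2 := by intro t; ring
  have e1 : Integrable (fun t : ℝ => m1 ^ 2 + (-2 * m1) * t) μ := by
    exact (integrable_const _).add (hti.const_mul _)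
  have e3 : Integrable (fun t : ℝ => (-2 * m1) * t) μ := by exact hti.const_mul _
  rw [integral_congr_ae (Filter.Eventually.of_forall hpt),
    integral_add e1 hint, integral_add (integrable_const _) e3, integral_const_mul, integral_const]
  simp [measure_univ]
  ring

lemma var_nonneg (hint : Integrable (fun t : ℝ => t ^ 2) μ) :
    0 ≤ (∫ t, t ^ 2 ∂μ) - (∫ t, t ∂μ) ^ 2 := by
  rw [← var_eq hint]
  exact integral_nonneg fun t => sq_nonneg _

/-- `‖A‖ ≤ σ² ‖m‖ / y` where `A = 1 + (z - m₁) m`. -/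
lemma A_est (hint : Integrable (fun t : ℝ => t ^ 2) μ) (z : ℂ) (hz : 0 < z.im) :
    ‖(1 : ℂ) + (z - ((∫ t, t ∂μ : ℝ) : ℂ)) * stT μ z‖ ≤
      ((∫ t, t ^ 2 ∂μ) - (∫ t, t ∂μ) ^ 2) * ‖stT μ z‖ / z.im := by
  set m := stT μ z with hm
  set m1 := ∫ t, t ∂μ with hm1
  set m2 := ∫ t, t ^ 2 ∂μ with hm2
  set y := z.im with hy
  have hu := int_u (μ := μ) z hz
  have hti := int_abs_t (μ := μ) hint
  have humc : Continuous (fun t : ℝ => ((t : ℂ) - z)⁻¹ - m) := (cont_u z hz).sub continuous_const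
  have hbd : ∀ t : ℝ, ‖((t : ℂ) - z)⁻¹ - m‖ ≤ y⁻¹ + ‖m‖ := fun t =>
    (norm_sub_le _ _).trans (add_le_add_left (norm_u_le z hz t) _)
  have hsqi : Integrable (fun t : ℝ => ‖((t : ℂ) - z)⁻¹ - m‖ ^ 2) μ := by
    apply Integrable.mono' (integrable_const ((y⁻¹ + ‖m‖) ^ 2))
      ((humc.norm.pow 2).aestronglyMeasurable)
    apply Filter.Eventually.of_forall
    intro t
    rw [Real.norm_eq_abs, abs_of_nonneg (sq_nonneg _)]
    exact pow_le_pow_left₀ (norm_nonneg _) (hbd t) 2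
  have hquadi : Integrable (fun t : ℝ => (t - m1) ^ 2) μ := by
    have : (fun t : ℝ => (t - m1) ^ 2) = fun t => t ^ 2 + ((-2 * m1) * t + m1 ^ 2) := by
      funext t; ring
    rw [this]
    exact hint.add ((hti.const_mul _).add (integrable_const _))
  have hxui : Integrable (fun t : ℝ => ((t : ℂ) - (m1 : ℝ)) * (((t : ℂ) - z)⁻¹ - m)) μ := by
    apply Integrable.mono' (((hti.sub (integrable_const m1)).abs).mul_const (y⁻¹ + ‖m‖))
    · exact ((Complex.continuous_ofReal.sub continuous_const).mul humc).aestronglyMeasurable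
    · apply Filter.Eventually.of_forall
      intro t
      rw [norm_mul]
      have h1 : ‖((t : ℂ) - (m1 : ℝ))‖ = |t - m1| := by
        rw [show ((t : ℂ) - (m1 : ℝ)) = (((t - m1 : ℝ)) : ℂ) by push_cast; ring, norm_coe]
      rw [h1]
      exact mul_le_mul (le_refl _) (hbd t) (norm_nonneg _) (abs_nonneg _)
  have hxurepr : ∫ t, ((t : ℂ) - (m1 : ℝ)) * (((t : ℂ) - z)⁻¹ - m) ∂μ
      = 1 + (z - (m1 : ℝ)) * m := by
    have hpt : ∀ t : ℝ, ((t : ℂ) - (m1 : ℝ)) * (((t : ℂ) - z)⁻¹ - m)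
        = (1 + (z - (m1 : ℝ)) * ((t : ℂ) - z)⁻¹) - ((t : ℂ) * m - (m1 : ℝ) * m) := by
      intro t
      have h2 : ((t : ℂ) - z) * ((t : ℂ) - z)⁻¹ = 1 := mul_inv_cancel₀ (sub_ne z hz t)
      have h3 : ((t : ℂ) - (m1 : ℝ)) * (((t : ℂ) - z)⁻¹ - m)
          = ((t : ℂ) - z) * ((t : ℂ) - z)⁻¹ + (z - (m1 : ℝ)) * ((t : ℂ) - z)⁻¹
            - ((t : ℂ) * m - (m1 : ℝ) * m) := by ring
      rw [h3, h2]
    rw [integral_congr_ae (Filter.Eventually.of_forall hpt)]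
    have I1 : Integrable (fun t : ℝ => 1 + (z - (m1 : ℝ)) * ((t : ℂ) - z)⁻¹) μ :=
      (integrable_const _).add (hu.const_mul _)
    have I2 : Integrable (fun t : ℝ => (t : ℂ) * m) μ := hti.ofReal.mul_const m
    have I3 : Integrable (fun t : ℝ => (t : ℂ) * m - (m1 : ℝ) * m) μ := I2.sub (integrable_const _)
    have hcoe : (∫ t : ℝ, (t : ℂ) ∂μ) = ((m1 : ℝ) : ℂ) := by
      rw [hm1]; exact integral_ofReal
    rw [integral_sub I1 I3, integral_sub I2 (integrable_const _),
      integral_add (integrable_const _) (hu.const_mul _), integral_const_mul,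
      integral_mul_const, hcoe, integral_const, integral_const]
    simp only [measure_univ, ENNReal.toReal_one, probReal_univ, one_smul, smul_eq_mul]
    have hmm : (∫ a : ℝ, ((a : ℂ) - z)⁻¹ ∂μ) = m := rfl
    rw [hmm]
    ring
  -- Cauchy-Schwarz
  have hfn : Integrable (fun t : ℝ => ‖((t : ℂ) - (m1 : ℝ))‖ ^ 2) μ := by
    apply hquadi.congr
    apply Filter.Eventually.of_forall
    intro t
    show (t - m1) ^ 2 = ‖(t : ℂ) - ((m1 : ℝ) : ℂ)‖ ^ 2
    rw [show ((t : ℂ) - (m1 : ℝ)) = (((t - m1 : ℝ)) : ℂ) by push_cast; ring, norm_coe, sq_abs]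
  have hcs := cs_complex (μ := μ) (fun t => ((t : ℂ) - (m1 : ℝ)))
    (fun t => ((t : ℂ) - z)⁻¹ - m) hfn hsqi hxui
  rw [hxurepr] at hcs
  have hfval : (∫ t, ‖((t : ℂ) - (m1 : ℝ))‖ ^ 2 ∂μ) = m2 - m1 ^ 2 := by
    rw [show (fun t : ℝ => ‖((t : ℂ) - (m1 : ℝ))‖ ^ 2) = fun t : ℝ => (t - m1) ^ 2 by
      funext t
      rw [show ((t : ℂ) - (m1 : ℝ)) = (((t - m1 : ℝ)) : ℂ) by push_cast; ring, norm_coe, sq_abs]]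
    exact var_eq hint
  rw [hfval] at hcs
  -- combine with key_est
  have hkey := key_est hint z hz
  have hv : (∫ t, ‖((t : ℂ) - z)⁻¹ - m‖ ^ 2 ∂μ) ≤ (m2 - m1 ^ 2) * ‖m‖ ^ 2 / y ^ 2 := by
    rw [le_div_iff₀ (by positivity)]
    calc (∫ t, ‖((t : ℂ) - z)⁻¹ - m‖ ^ 2 ∂μ) * y ^ 2
        = y ^ 2 * ∫ t, ‖((t : ℂ) - z)⁻¹ - m‖ ^ 2 ∂μ := by ring
      _ ≤ (m2 - m1 ^ 2) * ‖m‖ ^ 2 := hkey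
  have hσ0 : 0 ≤ m2 - m1 ^ 2 := var_nonneg hint
  have hVnn : 0 ≤ ∫ t, ‖((t : ℂ) - z)⁻¹ - m‖ ^ 2 ∂μ := integral_nonneg fun t => sq_nonneg _
  have h2 : ‖(1 : ℂ) + (z - (m1 : ℝ)) * m‖ ^ 2 ≤ ((m2 - m1 ^ 2) * ‖m‖ / y) ^ 2 := by
    calc ‖(1 : ℂ) + (z - (m1 : ℝ)) * m‖ ^ 2
        ≤ (m2 - m1 ^ 2) * ((m2 - m1 ^ 2) * ‖m‖ ^ 2 / y ^ 2) := by
          apply hcs.trans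
          exact mul_le_mul_of_nonneg_left hv hσ0
      _ = ((m2 - m1 ^ 2) * ‖m‖ / y) ^ 2 := by
          field_simp
  have hrhs : 0 ≤ (m2 - m1 ^ 2) * ‖m‖ / y := by positivity
  nlinarith [norm_nonneg ((1 : ℂ) + (z - (m1 : ℝ)) * m), h2]

/-- `‖F(z) − z + m₁‖ ≤ σ²/y`. -/
lemma F_shift (hint : Integrable (fun t : ℝ => t ^ 2) μ) (z : ℂ) (hz : 0 < z.im) :
    ‖Ffun μ z - z + ((∫ t, t ∂μ : ℝ) : ℂ)‖ ≤ ((∫ t, t ^ 2 ∂μ) - (∫ t, t ∂μ) ^ 2) / z.im := by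
  have hmne : stT μ z ≠ 0 := stT_ne z hz
  have hmpos : 0 < ‖stT μ z‖ := norm_pos_iff.2 hmne
  have hrepr : Ffun μ z - z + ((∫ t, t ∂μ : ℝ) : ℂ)
      = -((1 + (z - ((∫ t, t ∂μ : ℝ) : ℂ)) * stT μ z) / stT μ z) := by
    rw [Ffun]
    field_simp
    ring
  rw [hrepr, norm_neg, norm_div]
  rw [div_le_div_iff₀ hmpos hz]
  have h := A_est hint z hz
  rw [le_div_iff₀ hz] at h
  linarith [h]

/-- Lipschitz estimate for `F(z) - z`. -/
lemma delta_est (hint : Integrable (fun t : ℝ => t ^ 2) μ) (z w : ℂ)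
    (hz : 0 < z.im) (hw : 0 < w.im) :
    ‖(Ffun μ z - z) - (Ffun μ w - w)‖ ≤
      ((∫ t, t ^ 2 ∂μ) - (∫ t, t ∂μ) ^ 2) / (z.im * w.im) * ‖z - w‖ := by
  set mz := stT μ z with hmz
  set mw := stT μ w with hmw
  set σ2 := (∫ t, t ^ 2 ∂μ) - (∫ t, t ∂μ) ^ 2 with hσ2
  have hσ0 : 0 ≤ σ2 := var_nonneg hint
  have hmzne : mz ≠ 0 := stT_ne z hz
  have hmwne : mw ≠ 0 := stT_ne w hw
  have hmzpos : 0 < ‖mz‖ := norm_pos_iff.2 hmzne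
  have hmwpos : 0 < ‖mw‖ := norm_pos_iff.2 hmwne
  have huz := int_u (μ := μ) z hz
  have huw := int_u (μ := μ) w hw
  have huzw : Integrable (fun t : ℝ => ((t : ℂ) - z)⁻¹ * ((t : ℂ) - w)⁻¹) μ := by
    apply Integrable.mono' (integrable_const (z.im⁻¹ * w.im⁻¹))
    · exact ((cont_u z hz).mul (cont_u w hw)).aestronglyMeasurable
    · apply Filter.Eventually.of_forall
      intro t
      rw [norm_mul]
      exact mul_le_mul (norm_u_le z hz t) (norm_u_le w hw t) (norm_nonneg _)
        (le_of_lt (inv_pos.2 hz))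
  have hKid : mz - mw = (z - w) * ∫ t, ((t : ℂ) - z)⁻¹ * ((t : ℂ) - w)⁻¹ ∂μ := by
    rw [← integral_const_mul]
    rw [hmz, hmw, stT, stT, ← integral_sub huz huw]
    apply integral_congr_ae (Filter.Eventually.of_forall _)
    intro t
    have h1 := sub_ne z hz t
    have h2 := sub_ne w hw t
    field_simp
    ring
  have hcov : (∫ t, ((t : ℂ) - z)⁻¹ * ((t : ℂ) - w)⁻¹ ∂μ) - mz * mw
      = ∫ t, (((t : ℂ) - z)⁻¹ - mz) * (((t : ℂ) - w)⁻¹ - mw) ∂μ := by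
    have hpt : ∀ t : ℝ, (((t : ℂ) - z)⁻¹ - mz) * (((t : ℂ) - w)⁻¹ - mw)
        = ((t : ℂ) - z)⁻¹ * ((t : ℂ) - w)⁻¹
          - (mw * ((t : ℂ) - z)⁻¹ + mz * ((t : ℂ) - w)⁻¹ - mz * mw) := by
      intro t; ring
    rw [integral_congr_ae (Filter.Eventually.of_forall hpt)]
    have i1 : Integrable (fun t : ℝ => mw * ((t : ℂ) - z)⁻¹ + mz * ((t : ℂ) - w)⁻¹) μ := by
      exact (huz.const_mul _).add (huw.const_mul _)
    have i2 : Integrable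
        (fun t : ℝ => mw * ((t : ℂ) - z)⁻¹ + mz * ((t : ℂ) - w)⁻¹ - mz * mw) μ := by
      exact i1.sub (integrable_const _)
    rw [integral_sub huzw i2, integral_sub i1 (integrable_const _),
      integral_add (huz.const_mul _) (huw.const_mul _), integral_const_mul, integral_const_mul,
      integral_const]
    simp only [measure_univ, ENNReal.toReal_one, probReal_univ, one_smul, smul_eq_mul]
    have h1 : (∫ a : ℝ, ((a : ℂ) - z)⁻¹ ∂μ) = mz := rfl
    have h2 : (∫ a : ℝ, ((a : ℂ) - w)⁻¹ ∂μ) = mw := rfl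
    rw [h1, h2]
    ring
  -- CS bound on covariance
  have hbdz : ∀ t : ℝ, ‖((t : ℂ) - z)⁻¹ - mz‖ ≤ z.im⁻¹ + ‖mz‖ := fun t =>
    (norm_sub_le _ _).trans (add_le_add_left (norm_u_le z hz t) _)
  have hbdw : ∀ t : ℝ, ‖((t : ℂ) - w)⁻¹ - mw‖ ≤ w.im⁻¹ + ‖mw‖ := fun t =>
    (norm_sub_le _ _).trans (add_le_add_left (norm_u_le w hw t) _)
  have hsqz : Integrable (fun t : ℝ => ‖((t : ℂ) - z)⁻¹ - mz‖ ^ 2) μ := by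
    apply Integrable.mono' (integrable_const ((z.im⁻¹ + ‖mz‖) ^ 2))
      (((((cont_u z hz).sub continuous_const).norm).pow 2).aestronglyMeasurable)
    apply Filter.Eventually.of_forall
    intro t
    rw [Real.norm_eq_abs, abs_of_nonneg (sq_nonneg _)]
    exact pow_le_pow_left₀ (norm_nonneg _) (hbdz t) 2
  have hsqw : Integrable (fun t : ℝ => ‖((t : ℂ) - w)⁻¹ - mw‖ ^ 2) μ := by
    apply Integrable.mono' (integrable_const ((w.im⁻¹ + ‖mw‖) ^ 2))
      (((((cont_u w hw).sub continuous_const).norm).pow 2).aestronglyMeasurable)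
    apply Filter.Eventually.of_forall
    intro t
    rw [Real.norm_eq_abs, abs_of_nonneg (sq_nonneg _)]
    exact pow_le_pow_left₀ (norm_nonneg _) (hbdw t) 2
  have hprodi : Integrable (fun t : ℝ => (((t : ℂ) - z)⁻¹ - mz) * (((t : ℂ) - w)⁻¹ - mw)) μ := by
    apply Integrable.mono' (integrable_const ((z.im⁻¹ + ‖mz‖) * (w.im⁻¹ + ‖mw‖)))
    · exact (((cont_u z hz).sub continuous_const).mul
        ((cont_u w hw).sub continuous_const)).aestronglyMeasurable
    · apply Filter.Eventually.of_forall
      intro t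
      rw [norm_mul]
      exact mul_le_mul (hbdz t) (hbdw t) (norm_nonneg _) (by positivity)
  have hcs := cs_complex (μ := μ) _ _ hsqz hsqw hprodi
  rw [← hcov] at hcs
  have hkz := key_est hint z hz
  have hkw := key_est hint w hw
  rw [← hmz, ← hσ2] at hkz
  rw [← hmw, ← hσ2] at hkw
  have hVz : (∫ t, ‖((t : ℂ) - z)⁻¹ - mz‖ ^ 2 ∂μ) ≤ σ2 * ‖mz‖ ^ 2 / z.im ^ 2 := by
    rw [le_div_iff₀ (by positivity)]; nlinarith [hkz]
  have hVw : (∫ t, ‖((t : ℂ) - w)⁻¹ - mw‖ ^ 2 ∂μ) ≤ σ2 * ‖mw‖ ^ 2 / w.im ^ 2 := by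
    rw [le_div_iff₀ (by positivity)]; nlinarith [hkw]
  have hVznn : 0 ≤ ∫ t, ‖((t : ℂ) - z)⁻¹ - mz‖ ^ 2 ∂μ := integral_nonneg fun t => sq_nonneg _
  have hVwnn : 0 ≤ ∫ t, ‖((t : ℂ) - w)⁻¹ - mw‖ ^ 2 ∂μ := integral_nonneg fun t => sq_nonneg _
  have hcovbd : ‖(∫ t, ((t : ℂ) - z)⁻¹ * ((t : ℂ) - w)⁻¹ ∂μ) - mz * mw‖
      ≤ σ2 * ‖mz‖ * ‖mw‖ / (z.im * w.im) := by
    have h2 : ‖(∫ t, ((t : ℂ) - z)⁻¹ * ((t : ℂ) - w)⁻¹ ∂μ) - mz * mw‖ ^ 2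
        ≤ (σ2 * ‖mz‖ * ‖mw‖ / (z.im * w.im)) ^ 2 := by
      calc ‖(∫ t, ((t : ℂ) - z)⁻¹ * ((t : ℂ) - w)⁻¹ ∂μ) - mz * mw‖ ^ 2
          ≤ (σ2 * ‖mz‖ ^ 2 / z.im ^ 2) * (σ2 * ‖mw‖ ^ 2 / w.im ^ 2) := by
            apply hcs.trans
            exact mul_le_mul hVz hVw hVwnn (by positivity)
        _ = (σ2 * ‖mz‖ * ‖mw‖ / (z.im * w.im)) ^ 2 := by
            field_simp
    have hrhs : 0 ≤ σ2 * ‖mz‖ * ‖mw‖ / (z.im * w.im) := by positivity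
    nlinarith [norm_nonneg ((∫ t, ((t : ℂ) - z)⁻¹ * ((t : ℂ) - w)⁻¹ ∂μ) - mz * mw), h2]
  -- the difference identity
  have hdiff : (Ffun μ z - z) - (Ffun μ w - w)
      = (z - w) * ((∫ t, ((t : ℂ) - z)⁻¹ * ((t : ℂ) - w)⁻¹ ∂μ) - mz * mw) / (mz * mw) := by
    have h0 : (Ffun μ z - z) - (Ffun μ w - w)
        = ((mz - mw) + (w - z) * (mz * mw)) / (mz * mw) := by
      rw [show Ffun μ z = -(mz)⁻¹ from rfl, show Ffun μ w = -(mw)⁻¹ from rfl]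
      field_simp
      ring
    rw [h0, hKid]
    field_simp
    ring
  rw [hdiff]
  rw [norm_div, norm_mul]
  rw [div_le_iff₀ (norm_pos_iff.2 (mul_ne_zero hmzne hmwne))]
  calc ‖z - w‖ * ‖(∫ t, ((t : ℂ) - z)⁻¹ * ((t : ℂ) - w)⁻¹ ∂μ) - mz * mw‖
      ≤ ‖z - w‖ * (σ2 * ‖mz‖ * ‖mw‖ / (z.im * w.im)) := by
        exact mul_le_mul_of_nonneg_left hcovbd (norm_nonneg _)
    _ = σ2 / (z.im * w.im) * ‖z - w‖ * ‖mz * mw‖ := by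
        rw [norm_mul]
        field_simp

end SProof

open SProof in
theorem statement_10 (μ : Measure ℝ) [IsProbabilityMeasure μ]
    (hint : Integrable (fun t : ℝ => t ^ 2) μ)
    (σ2 : ℝ) (hσ2 : σ2 = (∫ t, t ^ 2 ∂μ) - (∫ t, t ∂μ) ^ 2) (hσpos : 0 < σ2)
    (ω : ℂ) (hω : 2 * Real.sqrt σ2 < ω.im) :
    ∃ z : ℂ, 0 < z.im ∧ kfun (ω.im / Real.sqrt σ2) * Real.sqrt σ2 ≤ z.im ∧ Ffun μ z = ω := by
  set σ := Real.sqrt σ2 with hσdef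
  have hσ : 0 < σ := Real.sqrt_pos.2 hσpos
  have hσsq : σ ^ 2 = σ2 := Real.sq_sqrt hσpos.le
  set t0 := ω.im / σ with ht0def
  have hωim : ω.im = t0 * σ := by rw [ht0def, div_mul_cancel₀ _ (ne_of_gt hσ)]
  have ht0 : 2 < t0 := by rw [lt_div_iff₀ hσ]; linarith
  have hr0 : 0 ≤ Real.sqrt (t0 ^ 2 - 4) := Real.sqrt_nonneg _
  have hr2 : Real.sqrt (t0 ^ 2 - 4) ^ 2 = t0 ^ 2 - 4 := Real.sq_sqrt (by nlinarith)
  set r := Real.sqrt (t0 ^ 2 - 4) with hrdef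
  set k := kfun t0 with hkdef
  have hkval : k = (t0 + r) / 2 := rfl
  have hk1 : 1 < k := by rw [hkval]; nlinarith
  have hkt0 : k ≤ t0 := by
    have hrt : r ≤ t0 := by nlinarith
    rw [hkval]; linarith
  have hkeq : k ^ 2 - t0 * k + 1 = 0 := by rw [hkval]; nlinarith
  set c := k * σ with hcdef
  have hc : 0 < c := by positivity
  have hkey : σ2 / c = ω.im - c := by
    rw [div_eq_iff (ne_of_gt hc)]
    rw [hωim, hcdef]
    nlinarith [hkeq, hσsq]
  -- the invariant set
  set Sset : Set ℂ := {v : ℂ | c ≤ v.im} with hSdef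
  have hclosed : IsClosed Sset := isClosed_le continuous_const Complex.continuous_im
  haveI : CompleteSpace Sset := hclosed.completeSpace_coe
  haveI : Nonempty Sset := ⟨⟨ω, by
    show c ≤ ω.im
    rw [hωim, hcdef]
    nlinarith⟩⟩
  -- the map
  have him : ∀ v : Sset, 0 < (v : ℂ).im := fun v => lt_of_lt_of_le hc v.2
  have hmaps : ∀ v : Sset, c ≤ (ω + (v : ℂ) - Ffun μ (v : ℂ)).im := by
    intro v
    have hvim := him v
    have h1 := F_shift hint (v : ℂ) hvim
    rw [← hσ2] at h1
    have h2 : (Ffun μ (v : ℂ) - (v : ℂ)).im ≤ σ2 / (v : ℂ).im := by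
      have h3 : (Ffun μ (v : ℂ) - (v : ℂ)).im
          = (Ffun μ (v : ℂ) - (v : ℂ) + ((∫ t, t ∂μ : ℝ) : ℂ)).im := by
        simp [Complex.add_im]
      rw [h3]
      calc (Ffun μ (v : ℂ) - (v : ℂ) + ((∫ t, t ∂μ : ℝ) : ℂ)).im
          ≤ |(Ffun μ (v : ℂ) - (v : ℂ) + ((∫ t, t ∂μ : ℝ) : ℂ)).im| := le_abs_self _
        _ ≤ ‖Ffun μ (v : ℂ) - (v : ℂ) + ((∫ t, t ∂μ : ℝ) : ℂ)‖ :=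
            Complex.abs_im_le_norm _
        _ = ‖Ffun μ (v : ℂ) - (v : ℂ) + ((∫ t, t ∂μ : ℝ) : ℂ)‖ := rfl
        _ ≤ σ2 / (v : ℂ).im := h1
    have h4 : σ2 / (v : ℂ).im ≤ σ2 / c := by
      apply div_le_div_of_nonneg_left hσpos.le hc v.2
    have h5 : (ω + (v : ℂ) - Ffun μ (v : ℂ)).im
        = ω.im + (v : ℂ).im - (Ffun μ (v : ℂ)).im := by simp [Complex.add_im, Complex.sub_im]
    rw [h5]
    have h6 : (Ffun μ (v : ℂ) - (v : ℂ)).im = (Ffun μ (v : ℂ)).im - (v : ℂ).im := by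
      simp [Complex.sub_im]
    rw [h6] at h2
    linarith [hkey, h2, h4]
  set Φ : Sset → Sset := fun v => ⟨ω + (v : ℂ) - Ffun μ (v : ℂ), hmaps v⟩ with hΦdef
  -- contraction
  set Kc : NNReal := ⟨σ2 / c ^ 2, by positivity⟩ with hKcdef
  have hKc1 : (Kc : ℝ) < 1 := by
    show σ2 / c ^ 2 < 1
    rw [div_lt_one (by positivity)]
    rw [hcdef]
    nlinarith
  have hlip : LipschitzWith Kc Φ := by
    apply LipschitzWith.of_dist_le_mul
    intro a b
    have ha := him a
    have hb := him b
    rw [Subtype.dist_eq, hΦdef]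
    show dist (ω + (a : ℂ) - Ffun μ (a : ℂ)) (ω + (b : ℂ) - Ffun μ (b : ℂ)) ≤ _
    rw [Complex.dist_eq, Subtype.dist_eq, Complex.dist_eq]
    have heq : (ω + (a : ℂ) - Ffun μ (a : ℂ)) - (ω + (b : ℂ) - Ffun μ (b : ℂ))
        = (Ffun μ (b : ℂ) - (b : ℂ)) - (Ffun μ (a : ℂ) - (a : ℂ)) := by ring
    rw [heq]
    have h1 := delta_est hint (b : ℂ) (a : ℂ) hb ha
    rw [← hσ2] at h1
    have h2 : σ2 / ((b : ℂ).im * (a : ℂ).im) ≤ σ2 / c ^ 2 := by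
      apply div_le_div_of_nonneg_left hσpos.le (by positivity)
      calc c ^ 2 = c * c := sq c
        _ ≤ (b : ℂ).im * (a : ℂ).im := mul_le_mul b.2 a.2 hc.le (le_trans hc.le b.2)
    have h3 : ‖(b : ℂ) - (a : ℂ)‖ = ‖(a : ℂ) - (b : ℂ)‖ := norm_sub_rev _ _
    calc ‖(Ffun μ (b : ℂ) - (b : ℂ)) - (Ffun μ (a : ℂ) - (a : ℂ))‖
        ≤ σ2 / ((b : ℂ).im * (a : ℂ).im) * ‖(b : ℂ) - (a : ℂ)‖ := h1
      _ ≤ σ2 / c ^ 2 * ‖(a : ℂ) - (b : ℂ)‖ := by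
          rw [h3]
          apply mul_le_mul_of_nonneg_right h2 (norm_nonneg _)
      _ = (Kc : ℝ) * ‖(a : ℂ) - (b : ℂ)‖ := rfl
  have hcontr : ContractingWith Kc Φ := by
    constructor
    · exact_mod_cast hKc1
    · exact hlip
  -- fixed point
  set zstar := ContractingWith.fixedPoint Φ hcontr with hzdef
  have hfix : Φ zstar = zstar := hcontr.fixedPoint_isFixedPt
  have hfeq : ω + (zstar : ℂ) - Ffun μ (zstar : ℂ) = (zstar : ℂ) := by
    have := congrArg Subtype.val hfix
    exact this
  have hF : Ffun μ (zstar : ℂ) = ω := by linear_combination -hfeq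
  refine ⟨(zstar : ℂ), lt_of_lt_of_le hc zstar.2, ?_, hF⟩
  exact zstar.2
end
end
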